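/- Let M be an invertible m×m matrix over F₂ and let G = T₂ ⊗ M, a 2m×2m matrix (in block form G = ((M,0),(M,M))). Then for every K with 1 ≤ K ≤ 2m, S_G(K) = max over all pairs (a,b) of nonnegative integers with a + b = K, a ≤ m, b ≤ m, of φ(a,b), where φ(a,0) = S_M(a), φ(0,b) = 2·S_M(b), and φ(a,b) = min(S_M(a), 2·S_M(b)) when a ≥ 1 and b ≥ 1. -/

import Mathlib

open Matrix

noncomputable section

abbrev F2 : Type := ZMod 2

/-- The Arikan kernel `T₂ = ((1,0),(1,1))` over `F₂`. -/
def T2 : Matrix (Fin 2) (Fin 2) F2 := !![1, 0; 1, 1]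

/-- Kronecker product of `Fin`-indexed square matrices, with the standard index
convention `(A ⊗ B) i j = A (i / n) (j / n) * B (i % n) (j % n)`. -/
def kron {m n : ℕ} (A : Matrix (Fin m) (Fin m) F2) (B : Matrix (Fin n) (Fin n) F2) :
    Matrix (Fin (m * n)) (Fin (m * n)) F2 :=
  fun i j => A i.divNat j.divNat * B i.modNat j.modNat

/-- The `n`-fold Kronecker power of `T₂` (with `T₂^{⊗0}` the 1×1 identity). -/
def T2pow : (n : ℕ) → Matrix (Fin (2 ^ n)) (Fin (2 ^ n)) F2
  | 0 => 1
  | n + 1 => (kron T2 (T2pow n)).submatrix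
      (Fin.cast (by rw [pow_succ, Nat.mul_comm]))
      (Fin.cast (by rw [pow_succ, Nat.mul_comm]))

/-- Minimum distance `d_G(I)`: the minimum Hamming weight of `u · G` over all
nonzero row vectors `u` with support contained in `I`. -/
def minDist {N : ℕ} (G : Matrix (Fin N) (Fin N) F2) (I : Finset (Fin N)) : ℕ :=
  sInf {w | ∃ u : Fin N → F2, u ≠ 0 ∧ (∀ i, u i ≠ 0 → i ∈ I) ∧
    hammingNorm (Matrix.vecMul u G) = w}

/-- Minimum-distance spectrum `S_G(K)`: the maximum of `d_G(I)` over all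
row-index sets `I` of size `K`. -/
def spec {N : ℕ} (G : Matrix (Fin N) (Fin N) F2) (K : ℕ) : ℕ :=
  sSup {d | ∃ I : Finset (Fin N), I.card = K ∧ minDist G I = d}

/-- `K`-th largest element (1-indexed, counted with multiplicity) of a
multiset of natural numbers. -/
def kthLargest (s : Multiset ℕ) (K : ℕ) : ℕ :=
  ((s.sort (· ≤ ·)).reverse).getD (K - 1) 0

/-- The quantity φ(a,b) from the max–min recursion:
`φ(a,0) = S(a)`, `φ(0,b) = 2·S(b)`, and `φ(a,b) = min(S(a), 2·S(b))` for `a,b ≥ 1`. -/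
def phi (S : ℕ → ℕ) (a b : ℕ) : ℕ :=
  if a = 0 then 2 * S b else if b = 0 then S a else min (S a) (2 * S b)

/-! ### Auxiliary machinery for the proof -/

variable {m : ℕ}

/-- Embedding `Fin m` into block `q` of `Fin (2 * m)`. -/
def emb (q : Fin 2) (i : Fin m) : Fin (2 * m) := finProdFinEquiv (q, i)

lemma emb_def (q : Fin 2) (i : Fin m) : finProdFinEquiv (q, i) = emb q i := rfl

lemma emb_divNat (q : Fin 2) (i : Fin m) : (emb q i).divNat = q := by
  have h := finProdFinEquiv.symm_apply_apply (q, i)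
  rw [finProdFinEquiv_symm_apply] at h
  exact congrArg Prod.fst h

lemma emb_modNat (q : Fin 2) (i : Fin m) : (emb q i).modNat = i := by
  have h := finProdFinEquiv.symm_apply_apply (q, i)
  rw [finProdFinEquiv_symm_apply] at h
  exact congrArg Prod.snd h

lemma emb_decomp (x : Fin (2 * m)) : emb x.divNat x.modNat = x := by
  have h := finProdFinEquiv.apply_symm_apply x
  rwa [finProdFinEquiv_symm_apply] at h

lemma emb_inj (q : Fin 2) : Function.Injective (emb (m := m) q) := by
  intro i j h
  have := finProdFinEquiv.injective h
  exact (Prod.mk.injEq _ _ _ _ ▸ this).2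

lemma norm_split (v : Fin (2 * m) → F2) :
    hammingNorm v = hammingNorm (fun i => v (emb 0 i)) + hammingNorm (fun i => v (emb 1 i)) := by
  classical
  simp only [hammingNorm, Finset.card_filter]
  rw [← Equiv.sum_comp (finProdFinEquiv : Fin 2 × Fin m ≃ Fin (2 * m))
    (fun x => if v x ≠ 0 then 1 else 0)]
  rw [Fintype.sum_prod_type, Fin.sum_univ_two]
  rfl

/-- The first-block component of a row vector. -/
def lo (u : Fin (2 * m) → F2) : Fin m → F2 := fun i => u (emb 0 i)
/-- The second-block component of a row vector. -/
def hi (u : Fin (2 * m) → F2) : Fin m → F2 := fun i => u (emb 1 i)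

lemma vecMul_kron_col (M : Matrix (Fin m) (Fin m) F2) (u : Fin (2 * m) → F2)
    (q : Fin 2) (j : Fin m) :
    Matrix.vecMul u (kron T2 M) (emb q j)
      = if q = 0 then Matrix.vecMul (lo u + hi u) M j else Matrix.vecMul (hi u) M j := by
  simp only [Matrix.vecMul, dotProduct, kron]
  rw [← Equiv.sum_comp (finProdFinEquiv : Fin 2 × Fin m ≃ Fin (2 * m))]
  rw [Fintype.sum_prod_type, Fin.sum_univ_two]
  simp only [emb_def, emb_divNat, emb_modNat]
  fin_cases q
  · have h0 : T2 0 0 = 1 := by decide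
    have h1 : T2 1 0 = 1 := by decide
    simp [h0, h1, lo, hi, Finset.sum_add_distrib, add_mul]
  · have h0 : T2 0 1 = 0 := by decide
    have h1 : T2 1 1 = 1 := by decide
    have h2 : (1 : Fin 2) ≠ 0 := by decide
    simp [h0, h1, h2, hi]

/-- The fundamental weight identity for `T₂ ⊗ M`. -/
lemma weight_eq (M : Matrix (Fin m) (Fin m) F2) (u : Fin (2 * m) → F2) :
    hammingNorm (Matrix.vecMul u (kron T2 M))
      = hammingNorm (Matrix.vecMul (lo u + hi u) M) + hammingNorm (Matrix.vecMul (hi u) M) := by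
  rw [norm_split (Matrix.vecMul u (kron T2 M))]
  have h0 : (fun i => Matrix.vecMul u (kron T2 M) (emb 0 i)) = Matrix.vecMul (lo u + hi u) M := by
    funext j; rw [vecMul_kron_col]; simp
  have h1 : (fun i => Matrix.vecMul u (kron T2 M) (emb 1 i)) = Matrix.vecMul (hi u) M := by
    funext j; rw [vecMul_kron_col]; simp
  rw [h0, h1]

/-- Pair two half-vectors into one vector on `Fin (2 * m)`. -/
def pairFun (u₀ u₁ : Fin m → F2) : Fin (2 * m) → F2 :=
  fun x => if x.divNat = 0 then u₀ x.modNat else u₁ x.modNat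

lemma lo_pairFun (u₀ u₁ : Fin m → F2) : lo (pairFun u₀ u₁) = u₀ := by
  funext i; simp [lo, pairFun, emb_divNat, emb_modNat]

lemma hi_pairFun (u₀ u₁ : Fin m → F2) : hi (pairFun u₀ u₁) = u₁ := by
  funext i
  have : (1 : Fin 2) ≠ 0 := by decide
  simp [hi, pairFun, emb_divNat, emb_modNat, this]

lemma fin2_cases (q : Fin 2) : q = 0 ∨ q = 1 := by fin_cases q <;> simp

lemma pairFun_eq (u : Fin (2 * m) → F2) : pairFun (lo u) (hi u) = u := by
  funext x
  rcases fin2_cases x.divNat with h | h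
  · have h2 : pairFun (lo u) (hi u) x = lo u x.modNat := by simp [pairFun, h]
    rw [h2, lo, ← h, emb_decomp]
  · have hne : x.divNat ≠ 0 := by rw [h]; decide
    have h2 : pairFun (lo u) (hi u) x = hi u x.modNat := by simp [pairFun, hne]
    rw [h2, hi, ← h, emb_decomp]

/-- Triangle inequality for the Hamming norm. -/
lemma hammingNorm_add_le {k : ℕ} (x y : Fin k → F2) :
    hammingNorm (x + y) ≤ hammingNorm x + hammingNorm y := by
  classical
  have h1 : hammingNorm (x + y) = hammingDist (x + y) 0 := (hammingDist_zero_right _).symm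
  have h2 : hammingDist (x + y) 0 ≤ hammingDist (x + y) y + hammingDist y 0 :=
    hammingDist_triangle _ _ _
  have h3 : hammingDist (x + y) y = hammingNorm x := by
    rw [hammingDist_eq_hammingNorm]; simp
    rw [show -x = x from funext fun i => (by decide : ∀ a : F2, -a = a) _]
  rw [h1]
  calc hammingDist (x + y) 0 ≤ hammingDist (x + y) y + hammingDist y 0 := h2
    _ = hammingNorm x + hammingNorm y := by rw [h3, hammingDist_zero_right]

lemma F2_add_cancel {k : ℕ} (x y : Fin k → F2) : (x + y) + y = x := by
  funext i
  have : ∀ a b : F2, (a + b) + b = a := by decide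
  exact this _ _

/-! ### Generic lemmas about `minDist` and `spec` -/

section generic
variable {N : ℕ} (G : Matrix (Fin N) (Fin N) F2)

lemma minDist_set_nonempty {I : Finset (Fin N)} (hI : I.Nonempty) :
    {w | ∃ u : Fin N → F2, u ≠ 0 ∧ (∀ i, u i ≠ 0 → i ∈ I) ∧
      hammingNorm (Matrix.vecMul u G) = w}.Nonempty := by
  obtain ⟨i, hi⟩ := hI
  refine ⟨_, fun j => if j = i then 1 else 0, ?_, ?_, rfl⟩
  · intro h
    have := congrFun h i
    simp at this
  · intro j hj
    by_cases h : j = i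
    · exact h ▸ hi
    · simp [h] at hj

lemma minDist_le {I : Finset (Fin N)} {u : Fin N → F2} (hu : u ≠ 0)
    (hsupp : ∀ i, u i ≠ 0 → i ∈ I) :
    minDist G I ≤ hammingNorm (Matrix.vecMul u G) :=
  Nat.sInf_le ⟨u, hu, hsupp, rfl⟩

lemma exists_minDist {I : Finset (Fin N)} (hI : I.Nonempty) :
    ∃ u : Fin N → F2, u ≠ 0 ∧ (∀ i, u i ≠ 0 → i ∈ I) ∧
      hammingNorm (Matrix.vecMul u G) = minDist G I :=
  Nat.sInf_mem (minDist_set_nonempty G hI)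

lemma le_minDist {I : Finset (Fin N)} (hI : I.Nonempty) {t : ℕ}
    (h : ∀ u : Fin N → F2, u ≠ 0 → (∀ i, u i ≠ 0 → i ∈ I) →
      t ≤ hammingNorm (Matrix.vecMul u G)) :
    t ≤ minDist G I :=
  le_csInf (minDist_set_nonempty G hI) (fun w ⟨u, h1, h2, h3⟩ => h3 ▸ h u h1 h2)

lemma minDist_le_N (I : Finset (Fin N)) : minDist G I ≤ N := by
  rcases Set.eq_empty_or_nonempty {w | ∃ u : Fin N → F2, u ≠ 0 ∧ (∀ i, u i ≠ 0 → i ∈ I) ∧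
      hammingNorm (Matrix.vecMul u G) = w} with h | h
  · simp [minDist, h]
  · obtain ⟨u, _, _, hw⟩ := Nat.sInf_mem h
    rw [minDist, ← hw]
    exact le_trans hammingNorm_le_card_fintype (le_of_eq (Fintype.card_fin N))

lemma spec_bdd (K : ℕ) :
    BddAbove {d | ∃ I : Finset (Fin N), I.card = K ∧ minDist G I = d} :=
  ⟨N, fun _ ⟨I, _, hd⟩ => hd ▸ minDist_le_N G I⟩

lemma spec_le_N (K : ℕ) : spec G K ≤ N :=
  csSup_le' (fun _ ⟨I, _, hd⟩ => hd ▸ minDist_le_N G I)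

lemma minDist_le_spec {I : Finset (Fin N)} {K : ℕ} (hI : I.card = K) :
    minDist G I ≤ spec G K :=
  le_csSup (spec_bdd G K) ⟨I, hI, rfl⟩

lemma exists_spec_opt {K : ℕ} (hK : K ≤ N) :
    ∃ I : Finset (Fin N), I.card = K ∧ minDist G I = spec G K := by
  have hne : {d | ∃ I : Finset (Fin N), I.card = K ∧ minDist G I = d}.Nonempty := by
    obtain ⟨I, _, hI⟩ := Finset.exists_subset_card_eq
      (s := (Finset.univ : Finset (Fin N))) (n := K)
      (by simpa [Fintype.card_fin] using hK)
    exact ⟨minDist G I, I, hI, rfl⟩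
  exact Nat.sSup_mem hne (spec_bdd G K)

end generic

/-! ### Index-set splitting -/

def Iset0 (I : Finset (Fin (2 * m))) : Finset (Fin m) :=
  Finset.univ.filter (fun i => emb 0 i ∈ I)
def Iset1 (I : Finset (Fin (2 * m))) : Finset (Fin m) :=
  Finset.univ.filter (fun i => emb 1 i ∈ I)

lemma mem_Iset0 {I : Finset (Fin (2 * m))} {i : Fin m} : i ∈ Iset0 I ↔ emb 0 i ∈ I := by
  simp [Iset0]
lemma mem_Iset1 {I : Finset (Fin (2 * m))} {i : Fin m} : i ∈ Iset1 I ↔ emb 1 i ∈ I := by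
  simp [Iset1]

lemma emb_ne (i j : Fin m) : emb 0 i ≠ emb 1 j := by
  intro h
  have h2 := congrArg Fin.divNat h
  rw [emb_divNat, emb_divNat] at h2
  exact absurd h2 (by decide)

lemma union_disj (I₀ I₁ : Finset (Fin m)) :
    Disjoint (I₀.image (emb 0)) (I₁.image (emb 1)) := by
  rw [Finset.disjoint_left]
  rintro x hx0 hx1
  obtain ⟨i, _, hi⟩ := Finset.mem_image.1 hx0
  obtain ⟨j, _, hj⟩ := Finset.mem_image.1 hx1
  exact emb_ne i j (hi.trans hj.symm)

lemma card_union_embs (I₀ I₁ : Finset (Fin m)) :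
    (I₀.image (emb 0) ∪ I₁.image (emb 1)).card = I₀.card + I₁.card := by
  rw [Finset.card_union_of_disjoint (union_disj I₀ I₁),
    Finset.card_image_of_injective _ (emb_inj 0),
    Finset.card_image_of_injective _ (emb_inj 1)]

lemma I_decomp (I : Finset (Fin (2 * m))) :
    I = (Iset0 I).image (emb 0) ∪ (Iset1 I).image (emb 1) := by
  ext x
  simp only [Finset.mem_union, Finset.mem_image]
  constructor
  · intro hx
    rcases fin2_cases x.divNat with h | h
    · left
      have hx0 : emb 0 x.modNat = x := by rw [← h]; exact emb_decomp x
      exact ⟨x.modNat, mem_Iset0.2 (by rw [hx0]; exact hx), hx0⟩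
    · right
      have hx1 : emb 1 x.modNat = x := by rw [← h]; exact emb_decomp x
      exact ⟨x.modNat, mem_Iset1.2 (by rw [hx1]; exact hx), hx1⟩
  · rintro (⟨i, hi, rfl⟩ | ⟨i, hi, rfl⟩)
    · exact mem_Iset0.1 hi
    · exact mem_Iset1.1 hi

lemma card_split (I : Finset (Fin (2 * m))) :
    I.card = (Iset0 I).card + (Iset1 I).card := by
  conv_lhs => rw [I_decomp I]
  exact card_union_embs _ _

lemma Iset0_union (I₀ I₁ : Finset (Fin m)) :
    Iset0 (I₀.image (emb 0) ∪ I₁.image (emb 1)) = I₀ := by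
  ext i
  simp only [mem_Iset0, Finset.mem_union, Finset.mem_image]
  constructor
  · rintro (⟨j, hj, hji⟩ | ⟨j, _, hji⟩)
    · rwa [← emb_inj 0 hji]
    · exact absurd hji.symm (emb_ne i j)
  · intro hi; exact Or.inl ⟨i, hi, rfl⟩

lemma Iset1_union (I₀ I₁ : Finset (Fin m)) :
    Iset1 (I₀.image (emb 0) ∪ I₁.image (emb 1)) = I₁ := by
  ext i
  simp only [mem_Iset1, Finset.mem_union, Finset.mem_image]
  constructor
  · rintro (⟨j, _, hji⟩ | ⟨j, hj, hji⟩)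
    · exact absurd hji (emb_ne j i)
    · rwa [← emb_inj 1 hji]
  · intro hi; exact Or.inr ⟨i, hi, rfl⟩

/-! ### phi lemmas -/

lemma phi_le_left (S : ℕ → ℕ) {a b : ℕ} (ha : a ≠ 0) : phi S a b ≤ S a := by
  unfold phi
  rw [if_neg ha]
  by_cases hb : b = 0
  · rw [if_pos hb]
  · rw [if_neg hb]; exact min_le_left _ _

lemma phi_le_right (S : ℕ → ℕ) {a b : ℕ} (hb : b ≠ 0) : phi S a b ≤ 2 * S b := by
  unfold phi
  by_cases ha : a = 0
  · rw [if_pos ha]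
  · rw [if_neg ha, if_neg hb]; exact min_le_right _ _

/-! ### The two main bounds -/

section main
variable (M : Matrix (Fin m) (Fin m) F2)

lemma lo_supp_I (u₀ : Fin m → F2) {I : Finset (Fin (2 * m))}
    (hs : ∀ i, u₀ i ≠ 0 → i ∈ Iset0 I) :
    ∀ x, pairFun u₀ 0 x ≠ 0 → x ∈ I := by
  intro x hx
  rcases fin2_cases x.divNat with h | h
  · have he : pairFun u₀ 0 x = u₀ x.modNat := by simp [pairFun, h]
    have := mem_Iset0.1 (hs _ (he ▸ hx))
    rwa [← emb_decomp x, h]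
  · have hne : x.divNat ≠ 0 := by rw [h]; decide
    have he : pairFun u₀ 0 x = 0 := by simp [pairFun, hne]
    exact absurd he hx

lemma hi_supp_I (u₁ : Fin m → F2) {I : Finset (Fin (2 * m))}
    (hs : ∀ i, u₁ i ≠ 0 → i ∈ Iset1 I) :
    ∀ x, pairFun 0 u₁ x ≠ 0 → x ∈ I := by
  intro x hx
  rcases fin2_cases x.divNat with h | h
  · have he : pairFun 0 u₁ x = 0 := by simp [pairFun, h]
    exact absurd he hx
  · have hne : x.divNat ≠ 0 := by rw [h]; decide
    have he : pairFun 0 u₁ x = u₁ x.modNat := by simp [pairFun, hne]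
    have := mem_Iset1.1 (hs _ (he ▸ hx))
    rwa [← emb_decomp x, h]

lemma minDist_kron_le_left {I : Finset (Fin (2 * m))} (h : (Iset0 I).Nonempty) :
    minDist (kron T2 M) I ≤ minDist M (Iset0 I) := by
  obtain ⟨u₀, hu₀, hs, hw⟩ := exists_minDist M h
  have hune : pairFun u₀ (0 : Fin m → F2) ≠ 0 := by
    intro h0
    exact hu₀ (by rw [← lo_pairFun u₀ 0, h0]; rfl)
  have hwt : hammingNorm (Matrix.vecMul (pairFun u₀ 0) (kron T2 M)) = minDist M (Iset0 I) := by
    rw [weight_eq, lo_pairFun, hi_pairFun, add_zero, Matrix.zero_vecMul, hammingNorm_zero,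
      add_zero, hw]
  exact hwt ▸ minDist_le _ hune (lo_supp_I u₀ hs)

lemma minDist_kron_le_right {I : Finset (Fin (2 * m))} (h : (Iset1 I).Nonempty) :
    minDist (kron T2 M) I ≤ 2 * minDist M (Iset1 I) := by
  obtain ⟨u₁, hu₁, hs, hw⟩ := exists_minDist M h
  have hune : pairFun (0 : Fin m → F2) u₁ ≠ 0 := by
    intro h0
    exact hu₁ (by rw [← hi_pairFun 0 u₁, h0]; rfl)
  have hwt : hammingNorm (Matrix.vecMul (pairFun 0 u₁) (kron T2 M))
      = 2 * minDist M (Iset1 I) := by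
    rw [weight_eq, lo_pairFun, hi_pairFun, zero_add, hw, two_mul]
  exact hwt ▸ minDist_le _ hune (hi_supp_I u₁ hs)

/-- Upper bound: any `I` has distance at most `phi` of its split sizes. -/
lemma minDist_kron_le_phi {I : Finset (Fin (2 * m))} (hI : I.Nonempty) :
    minDist (kron T2 M) I ≤ phi (spec M) (Iset0 I).card (Iset1 I).card := by
  by_cases ha : (Iset0 I).card = 0
  · have hb : (Iset1 I).card ≠ 0 := by
      have := card_split I
      have hIc := Finset.card_pos.2 hI
      omega
    calc minDist (kron T2 M) I ≤ 2 * minDist M (Iset1 I) :=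
          minDist_kron_le_right M (Finset.card_pos.1 (Nat.pos_of_ne_zero hb))
      _ ≤ 2 * spec M (Iset1 I).card :=
          Nat.mul_le_mul_left 2 (minDist_le_spec M rfl)
      _ = phi (spec M) (Iset0 I).card (Iset1 I).card := by rw [phi, if_pos ha]
  · have hle : minDist (kron T2 M) I ≤ spec M (Iset0 I).card :=
      le_trans (minDist_kron_le_left M (Finset.card_pos.1 (Nat.pos_of_ne_zero ha)))
        (minDist_le_spec M rfl)
    by_cases hb : (Iset1 I).card = 0
    · calc minDist (kron T2 M) I ≤ spec M (Iset0 I).card := hle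
        _ = phi (spec M) (Iset0 I).card (Iset1 I).card := by rw [phi, if_neg ha, if_pos hb]
    · have hle2 : minDist (kron T2 M) I ≤ 2 * spec M (Iset1 I).card :=
        le_trans (minDist_kron_le_right M (Finset.card_pos.1 (Nat.pos_of_ne_zero hb)))
          (Nat.mul_le_mul_left 2 (minDist_le_spec M rfl))
      calc minDist (kron T2 M) I ≤ _ := le_min hle hle2
        _ = phi (spec M) (Iset0 I).card (Iset1 I).card := by rw [phi, if_neg ha, if_neg hb]

/-- Lower bound: for any valid split `(a, b)` there is a set of size `a + b`
achieving at least `phi`. -/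
lemma phi_le_spec_kron {a b : ℕ} (ha : a ≤ m) (hb : b ≤ m) (hab : 1 ≤ a + b) :
    phi (spec M) a b ≤ spec (kron T2 M) (a + b) := by
  obtain ⟨I₀, hc0, hm0⟩ := exists_spec_opt M ha
  obtain ⟨I₁, hc1, hm1⟩ := exists_spec_opt M hb
  set I : Finset (Fin (2 * m)) := I₀.image (emb 0) ∪ I₁.image (emb 1) with hIdef
  have hcard : I.card = a + b := by rw [hIdef, card_union_embs, hc0, hc1]
  have hIne : I.Nonempty := Finset.card_pos.1 (by omega)
  have key : phi (spec M) a b ≤ minDist (kron T2 M) I := by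
    apply le_minDist _ hIne
    intro u hu hsupp
    have hs0 : ∀ i, lo u i ≠ 0 → i ∈ I₀ := by
      intro i hi
      have h1 : emb 0 i ∈ I := hsupp _ hi
      have h2 : i ∈ Iset0 I := mem_Iset0.2 h1
      rwa [hIdef, Iset0_union] at h2
    have hs1 : ∀ i, hi u i ≠ 0 → i ∈ I₁ := by
      intro i hi2
      have h1 : emb 1 i ∈ I := hsupp _ hi2
      have h2 : i ∈ Iset1 I := mem_Iset1.2 h1
      rwa [hIdef, Iset1_union] at h2
    have hzero0 : a = 0 → lo u = 0 := by
      intro h0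
      have : I₀ = ∅ := Finset.card_eq_zero.1 (hc0.trans h0)
      funext i
      by_contra hne
      exact absurd (hs0 i hne) (by simp [this])
    have hzero1 : b = 0 → hi u = 0 := by
      intro h0
      have : I₁ = ∅ := Finset.card_eq_zero.1 (hc1.trans h0)
      funext i
      by_contra hne
      exact absurd (hs1 i hne) (by simp [this])
    rw [weight_eq]
    by_cases h1 : hi u = 0
    · have h0 : lo u ≠ 0 := by
        intro h0'
        exact hu (by rw [← pairFun_eq u, h0', h1]; funext x; simp [pairFun])
      have ha0 : a ≠ 0 := fun h => h0 (hzero0 h)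
      have hlo : spec M a ≤ hammingNorm (Matrix.vecMul (lo u + hi u) M) := by
        rw [h1, add_zero, ← hm0]
        exact minDist_le M h0 hs0
      calc phi (spec M) a b ≤ spec M a := phi_le_left _ ha0
        _ ≤ _ := le_trans hlo (Nat.le_add_right _ _)
    · have hb0 : b ≠ 0 := fun h => h1 (hzero1 h)
      by_cases h0 : lo u = 0
      · have hhi : spec M b ≤ hammingNorm (Matrix.vecMul (hi u) M) := by
          rw [← hm1]
          exact minDist_le M h1 hs1
        calc phi (spec M) a b ≤ 2 * spec M b := phi_le_right _ hb0
          _ ≤ 2 * hammingNorm (Matrix.vecMul (hi u) M) := Nat.mul_le_mul_left 2 hhi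
          _ = hammingNorm (Matrix.vecMul (hi u) M)
              + hammingNorm (Matrix.vecMul (hi u) M) := two_mul _
          _ ≤ _ := by rw [h0, zero_add]
      · have ha0 : a ≠ 0 := fun h => h0 (hzero0 h)
        have hlo : spec M a ≤ hammingNorm (Matrix.vecMul (lo u) M) := by
          rw [← hm0]; exact minDist_le M h0 hs0
        have htri : hammingNorm (Matrix.vecMul (lo u) M)
            ≤ hammingNorm (Matrix.vecMul (lo u + hi u) M)
              + hammingNorm (Matrix.vecMul (hi u) M) := by
          have hdec : lo u = (lo u + hi u) + hi u := (F2_add_cancel _ _).symm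
          calc hammingNorm (Matrix.vecMul (lo u) M)
              = hammingNorm (Matrix.vecMul ((lo u + hi u) + hi u) M) := by rw [← hdec]
            _ = hammingNorm (Matrix.vecMul (lo u + hi u) M + Matrix.vecMul (hi u) M) := by
                rw [Matrix.add_vecMul]
            _ ≤ _ := hammingNorm_add_le _ _
        calc phi (spec M) a b ≤ spec M a := phi_le_left _ ha0
          _ ≤ _ := le_trans hlo htri
  exact le_trans key (minDist_le_spec _ hcard)

end main

theorem spectrum_kron_T2_recursion
    (m : ℕ) (M : Matrix (Fin m) (Fin m) F2) (hM : IsUnit M)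
    (K : ℕ) (hK1 : 1 ≤ K) (hK2 : K ≤ 2 * m) :
    spec (kron T2 M) K =
      sSup {d | ∃ a b : ℕ, a + b = K ∧ a ≤ m ∧ b ≤ m ∧ d = phi (spec M) a b} := by
  have hBbdd : BddAbove {d | ∃ a b : ℕ, a + b = K ∧ a ≤ m ∧ b ≤ m ∧ d = phi (spec M) a b} := by
    refine ⟨2 * m, ?_⟩
    rintro d ⟨a, b, hab, ha, hb, rfl⟩
    have hsa := spec_le_N M a
    have hsb := spec_le_N M b
    unfold phi
    split_ifs <;> omega
  apply le_antisymm
  · obtain ⟨I, hcard, hmin⟩ := exists_spec_opt (kron T2 M) (show K ≤ 2 * m from hK2)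
    rw [← hmin]
    have hIne : I.Nonempty := Finset.card_pos.1 (by omega)
    refine le_trans (minDist_kron_le_phi M hIne)
      (le_csSup hBbdd ⟨(Iset0 I).card, (Iset1 I).card, ?_, ?_, ?_, rfl⟩)
    · rw [← card_split I, hcard]
    · calc (Iset0 I).card ≤ Finset.univ.card := Finset.card_le_univ _
        _ = m := by simp
    · calc (Iset1 I).card ≤ Finset.univ.card := Finset.card_le_univ _
        _ = m := by simp
  · have hBne : {d | ∃ a b : ℕ, a + b = K ∧ a ≤ m ∧ b ≤ m ∧
        d = phi (spec M) a b}.Nonempty :=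
      ⟨phi (spec M) (min K m) (K - min K m),
        min K m, K - min K m, by omega, by omega, by omega, rfl⟩
    apply csSup_le hBne
    rintro d ⟨a, b, hab, ha, hb, rfl⟩
    have h := phi_le_spec_kron M ha hb (by omega)
    rwa [hab] at h
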